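/- Let M be a d×d real matrix and n ≥ 1 a natural number such that M^n = 1. If trace(M) = d, then M = 1. -/

import Mathlib

open Polynomial Matrix

private lemma multiset_sum_le_card {s : Multiset ℝ} (h1 : ∀ x ∈ s, x ≤ 1) :
    s.sum ≤ Multiset.card s := by
  induction s using Multiset.induction with
  | empty => simp
  | cons a s ih =>
    simp only [Multiset.sum_cons, Multiset.card_cons]
    have ha : a ≤ 1 := h1 a (Multiset.mem_cons_self a s)
    have := ih (fun y hy => h1 y (Multiset.mem_cons_of_mem hy))
    push_cast
    linarith

private lemma multiset_all_eq_one_of_le_one_of_sum {s : Multiset ℝ}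
    (h1 : ∀ x ∈ s, x ≤ 1) (hs : s.sum = Multiset.card s) : ∀ x ∈ s, x = 1 := by
  induction s using Multiset.induction with
  | empty => simp
  | cons a s ih =>
    simp only [Multiset.sum_cons, Multiset.card_cons] at hs
    have ha : a ≤ 1 := h1 a (Multiset.mem_cons_self a s)
    have hsum : s.sum ≤ Multiset.card s :=
      multiset_sum_le_card (fun y hy => h1 y (Multiset.mem_cons_of_mem hy))
    have hcast : ((Multiset.card s + 1 : ℕ) : ℝ) = (Multiset.card s : ℝ) + 1 := by push_cast; ring
    have ha1 : a = 1 := by rw [hcast] at hs; linarith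
    intro x hx
    rcases Multiset.mem_cons.mp hx with rfl | hx
    · exact ha1
    · refine ih (fun y hy => h1 y (Multiset.mem_cons_of_mem hy)) ?_ x hx
      rw [hcast] at hs; linarith

/-- If `M` is a real `d × d` matrix with `M ^ n = 1` for some `n ≥ 1`,
and `trace M = d`, then `M = 1`. -/
theorem eq_one_of_trace_eq_dim {d : ℕ} (M : Matrix (Fin d) (Fin d) ℝ)
    (n : ℕ) (hn : 1 ≤ n) (h : M ^ n = 1) (htr : Matrix.trace M = (d : ℝ)) :
    M = 1 := by
  rcases Nat.eq_zero_or_pos d with hd | hd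
  · subst hd; exact Subsingleton.elim _ _
  have hn' : n ≠ 0 := Nat.one_le_iff_ne_zero.mp hn
  have hn0 : (n : ℂ) ≠ 0 := Nat.cast_ne_zero.mpr hn'
  set f : ℝ →+* ℂ := (algebraMap ℝ ℂ) with hf
  set N : Matrix (Fin d) (Fin d) ℂ := f.mapMatrix M with hNdef
  have hNpow : N ^ n = 1 := by rw [hNdef, ← _root_.map_pow, h, _root_.map_one]
  have htrN : Matrix.trace N = (d : ℂ) := by
    have h1 : f (Matrix.trace M) = Matrix.trace ((f : ℝ →+ ℂ).mapMatrix M) :=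
      AddMonoidHom.map_trace f M
    rw [htr] at h1
    rw [hNdef]
    simpa using h1.symm
  -- every root of the charpoly is in the spectrum
  have hspec : ∀ μ ∈ N.charpoly.roots, μ ∈ spectrum ℂ N := by
    intro μ hμ
    have hroot : N.charpoly.IsRoot μ := Polynomial.isRoot_of_mem_roots hμ
    rw [spectrum.mem_iff]
    intro hunit
    have heval : N.charpoly.eval μ = (Matrix.scalar (Fin d) μ - N).det := by
      rw [Matrix.charpoly, eval_det, matPolyEquiv_charmatrix]
      simp
    have hdet : IsUnit (Matrix.scalar (Fin d) μ - N).det := by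
      rw [← Matrix.isUnit_iff_isUnit_det]
      exact hunit
    rw [Polynomial.IsRoot.def] at hroot
    have h0 : (Matrix.scalar (Fin d) μ - N).det = 0 := by rw [← heval]; exact hroot
    rw [h0] at hdet
    exact hdet.ne_zero rfl
  -- every root is an n-th root of unity
  have hpow : ∀ μ ∈ N.charpoly.roots, μ ^ n = 1 := by
    intro μ hμ
    have h1 : μ ^ n ∈ spectrum ℂ (N ^ n) :=
      spectrum.pow_image_subset N n ⟨μ, hspec μ hμ, rfl⟩
    rw [hNpow, spectrum.mem_iff] at h1
    by_contra hne
    apply h1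
    have hu : IsUnit (μ ^ n - 1 : ℂ) := isUnit_iff_ne_zero.mpr (sub_ne_zero.mpr hne)
    simpa [map_sub, _root_.map_one] using hu.map (algebraMap ℂ (Matrix (Fin d) (Fin d) ℂ))
  have habs : ∀ μ ∈ N.charpoly.roots, ‖μ‖ = 1 := by
    intro μ hμ
    have h1 : ‖μ‖ ^ n = 1 := by
      rw [← norm_pow, hpow μ hμ, norm_one]
    have h0 : 0 ≤ ‖μ‖ := norm_nonneg μ
    rcases lt_trichotomy (‖μ‖) 1 with hlt | heq | hgt
    · exfalso
      have := pow_lt_one₀ h0 hlt hn'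
      rw [h1] at this; exact lt_irrefl _ this
    · exact heq
    · exfalso
      have := one_lt_pow₀ hgt hn'
      rw [h1] at this; exact lt_irrefl _ this
  have hsplit : N.charpoly.Splits := IsAlgClosed.splits N.charpoly
  have hcard : Multiset.card N.charpoly.roots = d := by
    rw [Polynomial.splits_iff_card_roots.mp hsplit, Matrix.charpoly_natDegree_eq_dim]
    simp
  have hsumroots : N.charpoly.roots.sum = (d : ℂ) := by
    rw [← Matrix.trace_eq_sum_roots_charpoly, htrN]
  have hsumre : (N.charpoly.roots.map Complex.re).sum = (d : ℝ) := by
    have h2 : Complex.reAddGroupHom N.charpoly.roots.sum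
        = (N.charpoly.roots.map Complex.re).sum := by
      simpa using map_multiset_sum Complex.reAddGroupHom N.charpoly.roots
    rw [hsumroots] at h2
    simpa using h2.symm
  have hre1 : ∀ μ ∈ N.charpoly.roots, μ.re = 1 := by
    intro μ hμ
    have := multiset_all_eq_one_of_le_one_of_sum (s := N.charpoly.roots.map Complex.re)
      (fun x hx => by
        obtain ⟨ν, hν, rfl⟩ := Multiset.mem_map.mp hx
        calc ν.re ≤ ‖ν‖ := Complex.re_le_norm ν
          _ = 1 := habs ν hν)
      (by rw [hsumre, Multiset.card_map, hcard])
    exact this μ.re (Multiset.mem_map_of_mem _ hμ)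
  have hroots : N.charpoly.roots = Multiset.replicate d 1 := by
    apply Multiset.eq_replicate.mpr
    refine ⟨hcard, ?_⟩
    intro μ hμ
    have h1 : μ.re = 1 := hre1 μ hμ
    have h2 : ‖μ‖ = 1 := habs μ hμ
    have h3 : μ.re * μ.re + μ.im * μ.im = 1 := by
      have := Complex.sq_norm μ
      rw [h2] at this
      rw [← Complex.normSq_apply]
      simpa using this.symm
    have h4 : μ.im = 0 := by
      rw [h1] at h3
      have : μ.im * μ.im = 0 := by linarith
      exact mul_self_eq_zero.mp this
    exact Complex.ext h1 h4
  have hcp : N.charpoly = (X - C 1) ^ d := by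
    rw [hsplit.eq_prod_roots_of_monic N.charpoly_monic, hroots]
    rw [Multiset.map_replicate, Multiset.prod_replicate]
  have hnil : (N - 1) ^ d = 0 := by
    have hch := N.aeval_self_charpoly
    rw [hcp] at hch
    simpa using hch
  -- coprimality argument
  set q : ℂ[X] := ∑ i ∈ Finset.range n, X ^ i with hq
  have hgeom : q * (X - 1) = X ^ n - 1 := geom_sum_mul X n
  have hdvd : ¬ (X - C 1 : ℂ[X]) ∣ q := by
    rw [Polynomial.dvd_iff_isRoot]
    intro hR
    rw [Polynomial.IsRoot.def] at hR
    simp [hq, Polynomial.eval_finset_sum] at hR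
    omega
  have hcop : IsCoprime ((X - C 1 : ℂ[X]) ^ d) q :=
    (((Polynomial.irreducible_X_sub_C (1 : ℂ)).coprime_iff_not_dvd).mpr hdvd).pow_left
  obtain ⟨a, b, hab⟩ := hcop
  have haeval1 : Polynomial.aeval N ((X - C 1 : ℂ[X]) ^ d) = 0 := by
    simpa using hnil
  have hbq : Polynomial.aeval N b * Polynomial.aeval N q = 1 := by
    have := congrArg (Polynomial.aeval N) hab
    rw [map_add, _root_.map_mul, _root_.map_mul, haeval1, mul_zero, _root_.map_one] at this
    simpa using this
  have hqb : Polynomial.aeval N q * Polynomial.aeval N b = 1 := by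
    rw [← _root_.map_mul, mul_comm, _root_.map_mul, hbq]
  have hu : IsUnit (Polynomial.aeval N q) :=
    ⟨⟨Polynomial.aeval N q, Polynomial.aeval N b, hqb, hbq⟩, rfl⟩
  have hmul : Polynomial.aeval N q * (N - 1) = 0 := by
    have := congrArg (Polynomial.aeval N) hgeom
    simp only [_root_.map_mul, map_sub, _root_.map_pow, Polynomial.aeval_X, _root_.map_one] at this
    rw [this, hNpow, sub_self]
  have hN1 : N = 1 := by
    have h0 : Polynomial.aeval N q * (N - 1) = Polynomial.aeval N q * 0 := by
      rw [hmul, mul_zero]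
    have := hu.mul_left_cancel h0
    rwa [sub_eq_zero] at this
  have : f.mapMatrix M = f.mapMatrix 1 := by rw [← hNdef, hN1, _root_.map_one]
  exact Matrix.map_injective f.injective this
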